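/- Let (A, ∘, [·,·]) be a finite-dimensional GD algebra and r = Σ xᵢ⊗yᵢ ∈ A⊗A skew-symmetric (τr = −r). Define T^r: A* → A by T^r(f) = Σ ⟨f,xᵢ⟩yᵢ. Then r is a solution of the GD Yang-Baxter equation, i.e. N(r) := r₁₃∘r₂₃ + r₁₂⋆r₂₃ + r₁₃∘r₁₂ = 0 and C(r) := [r₁₂,r₁₃] + [r₁₂,r₂₃] + [r₁₃,r₂₃] = 0, if and only if for all f,g ∈ A*: T^r(f)∘T^r(g) = T^r(L_⋆*(T^r(f))g) − T^r(R_∘*(T^r(g))f) and [T^r(f),T^r(g)] = T^r(ad*(T^r(f))g − ad*(T^r(g))f). -/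

import Mathlib

open scoped TensorProduct

def IsNovikov {A : Type*} [AddCommGroup A] (circ : A → A → A) : Prop :=
  (∀ a b c : A, circ (circ a b) c - circ a (circ b c) = circ (circ b a) c - circ b (circ a c)) ∧
  (∀ a b c : A, circ (circ a b) c = circ (circ a c) b)

def IsLieBr {A : Type*} [AddCommGroup A] (br : A → A → A) : Prop :=
  (∀ a b : A, br a b = - br b a) ∧
  (∀ a b c : A, br (br a b) c + br (br b c) a + br (br c a) b = 0)

def IsGD {A : Type*} [AddCommGroup A] (circ br : A → A → A) : Prop :=
  IsNovikov circ ∧ IsLieBr br ∧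
  (∀ a b c : A, br (circ a b) c - br (circ a c) b + circ (br a b) c
      - circ (br a c) b - circ a (br b c) = 0)

section Aux

open TensorProduct LinearMap

variable {k A : Type*} [Field k] [AddCommGroup A] [Module k A]

/-- Evaluation of a triple tensor against two functionals in the first two slots. -/
noncomputable def ev3 (f g : Module.Dual k A) : A ⊗[k] (A ⊗[k] A) →ₗ[k] A :=
  TensorProduct.lift (f.smulRight (TensorProduct.lift (g.smulRight LinearMap.id)))

@[simp] lemma ev3_tmul (f g : Module.Dual k A) (a b c : A) :
    ev3 f g (a ⊗ₜ[k] (b ⊗ₜ[k] c)) = f a • (g b • c) := by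
  simp [ev3]

lemma eq_zero_of_ev3 (t : A ⊗[k] (A ⊗[k] A)) (h : ∀ f g : Module.Dual k A, ev3 f g t = 0) :
    t = 0 := by
  set b := Module.Basis.ofVectorSpace k A
  set B := b.tensorProduct (b.tensorProduct b)
  have key : ∀ (i j l) (s : A ⊗[k] (A ⊗[k] A)),
      B.repr s (i, (j, l)) = b.repr (ev3 (b.coord i) (b.coord j) s) l := by
    intro i j l s
    induction s using TensorProduct.induction_on with
    | zero => simp
    | add u v hu hv => simp [map_add, hu, hv]
    | tmul a s' =>
      induction s' using TensorProduct.induction_on with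
      | zero => simp [B]
      | add u v hu hv =>
        have : a ⊗ₜ[k] (u + v) = a ⊗ₜ[k] u + a ⊗ₜ[k] v := by rw [tmul_add]
        rw [this, map_add, map_add, Finsupp.add_apply, map_add, Finsupp.add_apply, hu, hv]
      | tmul c d =>
        simp [B, Module.Basis.tensorProduct_repr_tmul_apply, Module.Basis.coord_apply, smul_smul,
          mul_assoc, mul_comm, mul_left_comm]
  have hrep : B.repr t = 0 := by
    ext idx
    obtain ⟨i, j, l⟩ := idx
    rw [key i j l t, h, map_zero]
    simp
  simpa using congrArg B.repr.symm hrep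

end Aux

theorem stmt13 {k A ι : Type*} [Field k] [AddCommGroup A] [Module k A]
    [FiniteDimensional k A] [Fintype ι]
    (circ br : A →ₗ[k] A →ₗ[k] A)
    (hGD : IsGD (fun a b => circ a b) (fun a b => br a b))
    (x y : ι → A)
    (hskew : (∑ i, x i ⊗ₜ[k] y i : A ⊗[k] A) = - ∑ i, y i ⊗ₜ[k] x i)
    (T : Module.Dual k A → A) (hT : ∀ f, T f = ∑ i, f (x i) • y i) :
    ((∑ i, ∑ j, x i ⊗ₜ[k] (x j ⊗ₜ[k] circ (y i) (y j))
        + ∑ i, ∑ j, x i ⊗ₜ[k] ((circ (y i) (x j) + circ (x j) (y i)) ⊗ₜ[k] y j)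
        + ∑ i, ∑ j, circ (x i) (x j) ⊗ₜ[k] (y j ⊗ₜ[k] y i)
        = (0 : A ⊗[k] (A ⊗[k] A))) ∧
     (∑ i, ∑ j, br (x i) (x j) ⊗ₜ[k] (y i ⊗ₜ[k] y j)
        + ∑ i, ∑ j, x i ⊗ₜ[k] (br (y i) (x j) ⊗ₜ[k] y j)
        + ∑ i, ∑ j, x i ⊗ₜ[k] (x j ⊗ₜ[k] br (y i) (y j))
        = (0 : A ⊗[k] (A ⊗[k] A))))
    ↔ (∀ f g : Module.Dual k A,
        (circ (T f) (T g)
          = T (-(g ∘ₗ (circ (T f) + circ.flip (T f)))) - T (-(f ∘ₗ circ.flip (T g)))) ∧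
        (br (T f) (T g)
          = T ((-(g ∘ₗ br (T f))) - (-(f ∘ₗ br (T g)))))) := by
  classical
  -- skew-symmetry, applied through an arbitrary bilinear form
  have skewp : ∀ (φ ψ : Module.Dual k A) (v : A),
      ∑ i, (φ (x i) * ψ (y i)) • v = -∑ i, (φ (y i) * ψ (x i)) • v := by
    intro φ ψ v
    let S : A →ₗ[k] A →ₗ[k] A := LinearMap.mk₂ k (fun b c => (φ b * ψ c) • v)
      (by intros; simp [add_mul, add_smul])
      (by intros; simp [smul_smul, mul_assoc])
      (by intros; simp [mul_add, add_smul])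
      (by intros; simp [smul_smul, mul_left_comm, smul_eq_mul])
    have := congrArg (TensorProduct.lift S) hskew
    simpa [map_sum, S] using this
  have key1 : ∀ f g : Module.Dual k A,
      ev3 f g (∑ i, ∑ j, x i ⊗ₜ[k] (x j ⊗ₜ[k] circ (y i) (y j))
          + ∑ i, ∑ j, x i ⊗ₜ[k] ((circ (y i) (x j) + circ (x j) (y i)) ⊗ₜ[k] y j)
          + ∑ i, ∑ j, circ (x i) (x j) ⊗ₜ[k] (y j ⊗ₜ[k] y i))
        = circ (T f) (T g)
          - (T (-(g ∘ₗ (circ (T f) + circ.flip (T f)))) - T (-(f ∘ₗ circ.flip (T g)))) := by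
    intro f g
    have e1 : ev3 f g (∑ i, ∑ j, x i ⊗ₜ[k] (x j ⊗ₜ[k] circ (y i) (y j)))
        = ∑ i, ∑ j, (f (x i) * g (x j)) • circ (y i) (y j) := by
      simp [smul_smul]
    have e2 : ev3 f g (∑ i, ∑ j, x i ⊗ₜ[k] ((circ (y i) (x j) + circ (x j) (y i)) ⊗ₜ[k] y j))
        = ∑ i, ∑ j, (f (x i) * (g (circ (y i) (x j)) + g (circ (x j) (y i)))) • y j := by
      simp [smul_smul, mul_add, add_smul, add_mul]
    have e3 : ev3 f g (∑ i, ∑ j, circ (x i) (x j) ⊗ₜ[k] (y j ⊗ₜ[k] y i))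
        = ∑ i, ∑ j, (f (circ (x i) (x j)) * g (y j)) • y i := by
      simp [smul_smul]
    have r1 : circ (T f) (T g) = ∑ i, ∑ j, (f (x i) * g (x j)) • circ (y i) (y j) := by
      rw [hT, hT]
      simp only [map_sum, map_smul, LinearMap.sum_apply, LinearMap.smul_apply, Finset.smul_sum,
        smul_smul]
      rw [Finset.sum_comm]
      exact Finset.sum_congr rfl fun i _ => Finset.sum_congr rfl fun j _ => by rw [mul_comm]
    have r2 : T (-(g ∘ₗ (circ (T f) + circ.flip (T f))))
        = -∑ i, ∑ j, (f (x i) * (g (circ (y i) (x j)) + g (circ (x j) (y i)))) • y j := by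
      rw [hT, hT]
      rw [Finset.sum_comm (γ := ι)]
      simp [Finset.sum_neg_distrib, mul_add, add_smul, smul_smul, Finset.sum_add_distrib,
        Finset.sum_smul]
    have r3 : T (-(f ∘ₗ circ.flip (T g)))
        = -∑ i, ∑ j, (g (x j) * f (circ (x i) (y j))) • y i := by
      rw [hT, hT]
      simp only [LinearMap.neg_apply, LinearMap.comp_apply, LinearMap.flip_apply, map_sum,
        LinearMap.sum_apply, LinearMap.smul_apply, map_smul, smul_eq_mul, neg_smul,
        Finset.sum_smul, Finset.sum_neg_distrib, smul_smul]
    have e3' : ∑ i, ∑ j, (f (circ (x i) (x j)) * g (y j)) • y i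
        = -∑ i, ∑ j, (g (x j) * f (circ (x i) (y j))) • y i := by
      rw [← Finset.sum_neg_distrib]
      refine Finset.sum_congr rfl fun i _ => ?_
      simpa [mul_comm] using skewp (f ∘ₗ circ (x i)) g (y i)
    rw [map_add, map_add, e1, e2, e3, r1, r2, r3, e3']
    abel
  have key2 : ∀ f g : Module.Dual k A,
      ev3 f g (∑ i, ∑ j, br (x i) (x j) ⊗ₜ[k] (y i ⊗ₜ[k] y j)
          + ∑ i, ∑ j, x i ⊗ₜ[k] (br (y i) (x j) ⊗ₜ[k] y j)
          + ∑ i, ∑ j, x i ⊗ₜ[k] (x j ⊗ₜ[k] br (y i) (y j)))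
        = br (T f) (T g) - T ((-(g ∘ₗ br (T f))) - (-(f ∘ₗ br (T g)))) := by
    intro f g
    have e1 : ev3 f g (∑ i, ∑ j, br (x i) (x j) ⊗ₜ[k] (y i ⊗ₜ[k] y j))
        = ∑ i, ∑ j, (f (br (x i) (x j)) * g (y i)) • y j := by
      simp [smul_smul]
    have e2 : ev3 f g (∑ i, ∑ j, x i ⊗ₜ[k] (br (y i) (x j) ⊗ₜ[k] y j))
        = ∑ i, ∑ j, (f (x i) * g (br (y i) (x j))) • y j := by
      simp [smul_smul]
    have e3 : ev3 f g (∑ i, ∑ j, x i ⊗ₜ[k] (x j ⊗ₜ[k] br (y i) (y j)))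
        = ∑ i, ∑ j, (f (x i) * g (x j)) • br (y i) (y j) := by
      simp [smul_smul]
    have r1 : br (T f) (T g) = ∑ i, ∑ j, (f (x i) * g (x j)) • br (y i) (y j) := by
      rw [hT, hT]
      simp only [map_sum, map_smul, LinearMap.sum_apply, LinearMap.smul_apply, Finset.smul_sum,
        smul_smul]
      rw [Finset.sum_comm]
      exact Finset.sum_congr rfl fun i _ => Finset.sum_congr rfl fun j _ => by rw [mul_comm]
    have r2 : T ((-(g ∘ₗ br (T f))) - (-(f ∘ₗ br (T g))))
        = -∑ i, ∑ j, (f (x i) * g (br (y i) (x j))) • y j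
          + ∑ i, ∑ j, (g (x i) * f (br (y i) (x j))) • y j := by
      rw [hT, hT, hT]
      simp only [LinearMap.sub_apply, LinearMap.neg_apply, LinearMap.add_apply,
        LinearMap.comp_apply, map_sum, LinearMap.sum_apply, LinearMap.smul_apply, map_smul,
        smul_eq_mul, sub_smul, neg_smul, add_smul, Finset.sum_smul, Finset.sum_sub_distrib,
        Finset.sum_neg_distrib, Finset.sum_add_distrib, smul_smul, sub_eq_add_neg, neg_neg]
      rw [Finset.sum_comm (γ := ι)]
      congr 1
      exact Finset.sum_comm ..
    have e1' : ∑ i, ∑ j, (f (br (x i) (x j)) * g (y i)) • y j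
        = -∑ i, ∑ j, (g (x i) * f (br (y i) (x j))) • y j := by
      calc ∑ i, ∑ j, (f (br (x i) (x j)) * g (y i)) • y j
          = ∑ j, ∑ i, (f (br (x i) (x j)) * g (y i)) • y j := Finset.sum_comm ..
        _ = ∑ j, -∑ i, (g (x i) * f (br (y i) (x j))) • y j :=
            Finset.sum_congr rfl fun j _ => by
              simpa [mul_comm] using skewp (f ∘ₗ br.flip (x j)) g (y j)
        _ = -∑ j, ∑ i, (g (x i) * f (br (y i) (x j))) • y j := by
            rw [Finset.sum_neg_distrib]
        _ = -∑ i, ∑ j, (g (x i) * f (br (y i) (x j))) • y j := by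
            rw [Finset.sum_comm]
    rw [map_add, map_add, e1, e2, e3, r1, r2, e1']
    abel
  constructor
  · rintro ⟨h1, h2⟩ f g
    refine ⟨?_, ?_⟩
    · have h := key1 f g
      rw [h1, map_zero] at h
      exact sub_eq_zero.mp h.symm
    · have h := key2 f g
      rw [h2, map_zero] at h
      exact sub_eq_zero.mp h.symm
  · intro h
    refine ⟨eq_zero_of_ev3 _ fun f g => ?_, eq_zero_of_ev3 _ fun f g => ?_⟩
    · rw [key1 f g, (h f g).1, sub_self]
    · rw [key2 f g, (h f g).2, sub_self]
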